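/- Let 0 < F < Q with F, Q, U₀, U₁ ∈ ℤ and let U : ℕ → ℤ satisfy the diffusion-free ultradiscrete Oregonator recursion U_{n+1} = max{U_n, F+Q+U_{n−1}−max(U_n,Q)} − max{U_n, F+U_{n−1}−max(U_n,Q)}. Then either U_n = F for all n (which occurs iff U₀ = U₁ = F), or there exists N such that U_{N+2m} = 0 and U_{N+2m+1} = Q for all m ≥ 0, i.e., U eventually settles into the 2-periodic solution (0, Q, 0, Q, …). -/
import Mathlib


theorem global_convergence (F Q : ℤ) (h1 : 0 < F) (h2 : F < Q) (U : ℕ → ℤ)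
    (hrec : ∀ n, U (n + 2) =
      max (U (n + 1)) (F + Q + U n - max (U (n + 1)) Q) -
        max (U (n + 1)) (F + U n - max (U (n + 1)) Q)) :
    ((∀ n, U n = F) ↔ U 0 = F ∧ U 1 = F) ∧
      ((∀ n, U n = F) ∨
        ∃ N, ∀ m : ℕ, U (N + 2 * m) = 0 ∧ U (N + 2 * m + 1) = Q) := by
  -- clamp form of the recursion, valid whenever U (n+1) ≤ Q
  have key : ∀ n, U (n+1) ≤ Q → U (n+2) = max 0 (min (F + U n - U (n+1)) Q) := by
    intro n hb
    have h := hrec n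
    omega
  have range : ∀ n, 0 ≤ U (n+2) ∧ U (n+2) ≤ Q := by
    intro n
    have h := hrec n
    omega
  have hle : ∀ n, 2 ≤ n → 0 ≤ U n ∧ U n ≤ Q := by
    intro n hn
    obtain ⟨k, rfl⟩ : ∃ k, n = k + 2 := ⟨n - 2, by omega⟩
    exact range k
  have key' : ∀ n, 1 ≤ n → U (n+2) = max 0 (min (F + U n - U (n+1)) Q) := by
    intro n hn
    exact key n (hle (n+1) (by omega)).2
  -- forward propagation of the fixed point
  have fwd : U 0 = F → U 1 = F → ∀ n, U n = F := by
    intro h0 h1' n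
    induction n using Nat.strong_induction_on with
    | _ n ih =>
      match n, ih with
      | 0, _ => exact h0
      | 1, _ => exact h1'
      | (k+2), ih =>
        have e1 : U k = F := ih k (by omega)
        have e2 : U (k+1) = F := ih (k+1) (by omega)
        have e := key k (by rw [e2]; omega)
        rw [e1, e2] at e
        omega
  -- backward propagation of the fixed point
  have back : ∀ n, U (n+1) = F → U (n+2) = F → U n = F := by
    intro n hn1 hn2
    have e := key n (by rw [hn1]; omega)
    rw [hn1] at e
    omega
  -- propagation of the 2-cycle
  have prop : ∀ N, U N = 0 → U (N+1) = Q →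
      ∀ m : ℕ, U (N + 2*m) = 0 ∧ U (N + 2*m + 1) = Q := by
    intro N h0 hQ m
    induction m with
    | zero =>
      constructor
      · rw [show N + 2*0 = N by omega]; exact h0
      · rw [show N + 2*0 + 1 = N + 1 by omega]; exact hQ
    | succ k ih =>
      obtain ⟨ih0, ih1⟩ := ih
      have e1 := key (N + 2*k) (le_of_eq ih1)
      rw [ih0, ih1] at e1
      have hz : U (N + 2*k + 2) = 0 := by omega
      have e2 := key (N + 2*k + 1) (by rw [hz]; omega)
      rw [ih1, hz] at e2
      constructor
      · rw [show N + 2*(k+1) = N + 2*k + 2 by omega]; exact hz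
      · rw [show N + 2*(k+1) + 1 = N + 2*k + 3 by omega]
        have : U (N + 2*k + 3) = max 0 (min (F + Q - 0) Q) := e2
        omega
  -- descent: once Q appears with small successor, we reach the cycle pair (0, Q)
  have descent : ∀ d : ℕ, ∀ n y, 1 ≤ n → U n = Q → U (n+1) = y → 0 ≤ y → y ≤ F →
      y ≤ (d:ℤ) → ∃ N, U N = 0 ∧ U (N+1) = Q := by
    intro d
    induction d with
    | zero =>
      intro n y hn hQn hy hy0 hyF hd
      have hy' : U (n+1) = 0 := by omega
      have e0 : U (n+2) = max 0 (min (F + U n - U (n+1)) Q) := key' n hn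
      rw [hQn, hy'] at e0
      exact ⟨n+1, hy', by show U (n+2) = Q; omega⟩
    | succ d ih =>
      intro n y hn hQn hy hy0 hyF hd
      by_cases hz : y = 0
      · have hy' : U (n+1) = 0 := by omega
        have e0 : U (n+2) = max 0 (min (F + U n - U (n+1)) Q) := key' n hn
        rw [hQn, hy'] at e0
        exact ⟨n+1, hy', by show U (n+2) = Q; omega⟩
      · have e0 : U (n+2) = max 0 (min (F + U n - U (n+1)) Q) := key' n hn
        rw [hQn, hy] at e0
        have h2Q : U (n+2) = Q := by omega
        have e1 : U (n+3) = max 0 (min (F + U (n+1) - U (n+2)) Q) := key' (n+1) (by omega)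
        rw [hy, h2Q] at e1
        have h3' : U (n+2+1) = max 0 (F + y - Q) := by show U (n+3) = _; omega
        exact ih (n+2) (max 0 (F + y - Q)) (by omega) h2Q h3'
          (by omega) (by omega) (by omega)
  -- ascent: once 0 appears with successor ≥ F, we reach the cycle pair (0, Q)
  have ascent : ∀ d : ℕ, ∀ n z, 1 ≤ n → U n = 0 → U (n+1) = z → F ≤ z → z ≤ Q →
      Q - z ≤ (d:ℤ) → ∃ N, U N = 0 ∧ U (N+1) = Q := by
    intro d
    induction d with
    | zero =>
      intro n z hn h0 hz hF hQz hd
      exact ⟨n, h0, by omega⟩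
    | succ d ih =>
      intro n z hn h0 hz hF hQz hd
      by_cases hzQ : z = Q
      · exact ⟨n, h0, by omega⟩
      · have e0 : U (n+2) = max 0 (min (F + U n - U (n+1)) Q) := key' n hn
        rw [h0, hz] at e0
        have h20 : U (n+2) = 0 := by omega
        have e1 : U (n+3) = max 0 (min (F + U (n+1) - U (n+2)) Q) := key' (n+1) (by omega)
        rw [hz, h20] at e1
        by_cases hQ3 : Q ≤ F + z
        · exact ⟨n+2, h20, by show U (n+3) = Q; omega⟩
        · have h3' : U (n+2+1) = F + z := by show U (n+3) = _; omega
          exact ih (n+2) (F + z) (by omega) h20 h3' (by omega) (by omega) (by omega)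
  refine ⟨⟨fun h => ⟨h 0, h 1⟩, fun h => fwd h.1 h.2⟩, ?_⟩
  by_cases hA : ∃ n, 3 ≤ n ∧ U n = Q
  · right
    obtain ⟨n, hn3, hUQ⟩ := hA
    obtain ⟨k, rfl⟩ : ∃ k, n = k + 1 := ⟨n - 1, by omega⟩
    have e : U (k+2) = max 0 (min (F + U k - U (k+1)) Q) := key' k (by omega)
    have hk := hle k (by omega)
    rw [hUQ] at e
    have hy : 0 ≤ U (k+2) ∧ U (k+2) ≤ F := by omega
    obtain ⟨N, hN0, hN1⟩ := descent (U (k+2)).toNat (k+1) (U (k+2)) (by omega) hUQ rfl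
      hy.1 hy.2 (by omega)
    exact ⟨N, prop N hN0 hN1⟩
  by_cases hB : ∃ n, 4 ≤ n ∧ U n = 0
  · right
    obtain ⟨n, hn4, hU0⟩ := hB
    obtain ⟨k, rfl⟩ : ∃ k, n = k + 2 := ⟨n - 2, by omega⟩
    have e0 : U (k+2) = max 0 (min (F + U k - U (k+1)) Q) := key' k (by omega)
    have hk := hle k (by omega)
    have hF1 : F ≤ U (k+1) := by rw [hU0] at e0; omega
    have hk1 := hle (k+1) (by omega)
    have e1 : U (k+3) = max 0 (min (F + U (k+1) - U (k+2)) Q) := key' (k+1) (by omega)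
    rw [hU0] at e1
    have hz : F ≤ U (k+3) ∧ U (k+3) ≤ Q := by omega
    obtain ⟨N, hN0, hN1⟩ := ascent (Q - U (k+3)).toNat (k+2) (U (k+3)) (by omega) hU0 rfl
      hz.1 hz.2 (by omega)
    exact ⟨N, prop N hN0 hN1⟩
  -- interior case: no Q from index 3 on, no 0 from index 4 on
  push_neg at hA hB
  have interior : ∀ n, 4 ≤ n → 1 ≤ U n ∧ U n ≤ Q - 1 := by
    intro n hn
    have h := hle n (by omega)
    have hAn := hA n (by omega)
    have hBn := hB n hn
    omega
  have lin : ∀ n, 4 ≤ n → U (n+2) = F + U n - U (n+1) := by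
    intro n hn
    have e := key' n (by omega)
    have h := interior (n+2) (by omega)
    omega
  -- tail maxima
  have hMex : ∀ i : ℕ, ∃ M : ℤ, (∃ n, 4 + i ≤ n ∧ U n = M) ∧
      ∀ x, (∃ n, 4 + i ≤ n ∧ U n = x) → x ≤ M := by
    intro i
    exact Int.exists_greatest_of_bdd
      ⟨Q, by rintro z ⟨n, hn, rfl⟩; exact (hle n (by omega)).2⟩
      ⟨U (4+i), 4+i, le_refl _, rfl⟩
  choose M hM1 hM2 using hMex
  have Mmono : ∀ i j : ℕ, i ≤ j → M j ≤ M i := by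
    intro i j hij
    obtain ⟨n, hn, hUn⟩ := hM1 j
    exact hM2 i (M j) ⟨n, by omega, hUn⟩
  have hMlb : ∀ i, 1 ≤ M i := by
    intro i
    obtain ⟨n, hn, hUn⟩ := hM1 i
    have := interior n (by omega)
    omega
  obtain ⟨Ms, hMsmem, hMs⟩ := Int.exists_least_of_bdd
    (P := fun x => ∃ i : ℕ, M i = x) ⟨1, by rintro z ⟨i, rfl⟩; exact hMlb i⟩ ⟨M 0, 0, rfl⟩
  obtain ⟨i0, hi0⟩ := hMsmem
  have hMconst : ∀ i, i0 ≤ i → M i = Ms := by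
    intro i hi
    have ha := Mmono i0 i hi
    have hb := hMs (M i) ⟨i, rfl⟩
    omega
  have hMsF : Ms ≤ F := by
    obtain ⟨n, hn, hUn⟩ := hM1 (i0+1)
    rw [hMconst (i0+1) (by omega)] at hUn
    obtain ⟨k, rfl⟩ : ∃ k, n = k + 1 := ⟨n - 1, by omega⟩
    have e1 : U (k+2) = F + U k - U (k+1) := lin k (by omega)
    have e2 : U (k+3) = F + U (k+1) - U (k+2) := lin (k+1) (by omega)
    have e3 : U (k+4) = F + U (k+2) - U (k+3) := lin (k+2) (by omega)
    have e4 : U (k+5) = F + U (k+3) - U (k+4) := lin (k+3) (by omega)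
    have b0 : U k ≤ Ms := by
      have := hM2 i0 (U k) ⟨k, by omega, rfl⟩; omega
    have b3 : U (k+3) ≤ Ms := by
      have := hM2 i0 (U (k+3)) ⟨k+3, by omega, rfl⟩; omega
    have b5 : U (k+5) ≤ Ms := by
      have := hM2 i0 (U (k+5)) ⟨k+5, by omega, rfl⟩; omega
    omega
  -- tail minima
  have hmex : ∀ i : ℕ, ∃ m : ℤ, (∃ n, 4 + i ≤ n ∧ U n = m) ∧
      ∀ x, (∃ n, 4 + i ≤ n ∧ U n = x) → m ≤ x := by
    intro i
    exact Int.exists_least_of_bdd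
      ⟨0, by rintro z ⟨n, hn, rfl⟩; exact (hle n (by omega)).1⟩
      ⟨U (4+i), 4+i, le_refl _, rfl⟩
  choose m hm1 hm2 using hmex
  have mmono : ∀ i j : ℕ, i ≤ j → m i ≤ m j := by
    intro i j hij
    obtain ⟨n, hn, hUn⟩ := hm1 j
    exact hm2 i (m j) ⟨n, by omega, hUn⟩
  have hmub : ∀ i, m i ≤ Q := by
    intro i
    obtain ⟨n, hn, hUn⟩ := hm1 i
    have := hle n (by omega)
    omega
  obtain ⟨ms, hmsmem, hms⟩ := Int.exists_greatest_of_bdd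
    (P := fun x => ∃ i : ℕ, m i = x) ⟨Q, by rintro z ⟨i, rfl⟩; exact hmub i⟩ ⟨m 0, 0, rfl⟩
  obtain ⟨j0, hj0⟩ := hmsmem
  have hmconst : ∀ i, j0 ≤ i → m i = ms := by
    intro i hi
    have ha := mmono j0 i hi
    have hb := hms (m i) ⟨i, rfl⟩
    omega
  have hmsF : F ≤ ms := by
    obtain ⟨n, hn, hUn⟩ := hm1 (j0+1)
    rw [hmconst (j0+1) (by omega)] at hUn
    obtain ⟨k, rfl⟩ : ∃ k, n = k + 1 := ⟨n - 1, by omega⟩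
    have e1 : U (k+2) = F + U k - U (k+1) := lin k (by omega)
    have e2 : U (k+3) = F + U (k+1) - U (k+2) := lin (k+1) (by omega)
    have e3 : U (k+4) = F + U (k+2) - U (k+3) := lin (k+2) (by omega)
    have e4 : U (k+5) = F + U (k+3) - U (k+4) := lin (k+3) (by omega)
    have b0 : ms ≤ U k := by
      have := hm2 j0 (U k) ⟨k, by omega, rfl⟩; omega
    have b3 : ms ≤ U (k+3) := by
      have := hm2 j0 (U (k+3)) ⟨k+3, by omega, rfl⟩; omega
    have b5 : ms ≤ U (k+5) := by
      have := hm2 j0 (U (k+5)) ⟨k+5, by omega, rfl⟩; omega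
    omega
  -- the tail is constantly F
  have hK : ∀ n, 4 + max i0 j0 ≤ n → U n = F := by
    intro n hn
    have hu := hM2 i0 (U n) ⟨n, by omega, rfl⟩
    have hl := hm2 j0 (U n) ⟨n, by omega, rfl⟩
    rw [hi0] at hu
    rw [hj0] at hl
    omega
  -- propagate backwards to all indices
  left
  have down : ∀ j : ℕ, ∀ n, 4 + max i0 j0 ≤ n + j → U n = F := by
    intro j
    induction j with
    | zero => intro n hn; exact hK n (by omega)
    | succ j ih =>
      intro n hn
      by_cases h : 4 + max i0 j0 ≤ n
      · exact hK n h
      · exact back n (ih (n+1) (by omega)) (ih (n+2) (by omega))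
  exact fun n => down (4 + max i0 j0) n (by omega)
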